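/- Let X be a nonempty set and let M be a submonoid of T(X) (containing the identity map on X). If f ∈ M is unit-regular in M, then f is semi-balanced. -/

import Mathlib

/-- An element `s` of a monoid is unit-regular if `s * u * s = s` for some unit `u`. -/
def IsUnitRegular {M : Type*} [Monoid M] (s : M) : Prop :=
  ∃ u : Mˣ, s * (↑u : M) * s = s

/-- `T` is a transversal of the equivalence relation `ker f = {(x,y) : f x = f y}`:
it contains exactly one element of each `ker f`-class. -/
def IsTransversal {X : Type*} (f : X → X) (T : Set X) : Prop :=
  ∀ x : X, ∃! t, t ∈ T ∧ f t = f x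

/-- `f` is semi-balanced if its collapse `c(f) = |X \ T|` (for a transversal `T` of `ker f`)
equals its defect `d(f) = |X \ f(X)|`. -/
def SemiBalanced {X : Type*} (f : X → X) : Prop :=
  ∃ T : Set X, IsTransversal f T ∧ Cardinal.mk ↥(Tᶜ) = Cardinal.mk ↥((Set.range f)ᶜ)

theorem stmt15 {X : Type*} [Nonempty X] (M : Submonoid (Function.End X))
    (f : Function.End X) (hf : f ∈ M)
    (h : IsUnitRegular (⟨f, hf⟩ : M)) :
    SemiBalanced (f : X → X) := by
  obtain ⟨u, hu⟩ := h
  -- underlying functions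
  set v : X → X := ((u : M) : Function.End X) with hv
  set w : X → X := ((↑u⁻¹ : M) : Function.End X) with hw
  have hvw : ∀ x, v (w x) = x := fun x =>
    congrFun (congrArg Subtype.val u.mul_inv) x
  have hwv : ∀ x, w (v x) = x := fun x =>
    congrFun (congrArg Subtype.val u.inv_mul) x
  have hfuf : ∀ x, f (v (f x)) = f x := by
    intro x
    have := congrArg (fun (g : M) => ((g : Function.End X) x)) hu
    exact this
  let e : X ≃ X := ⟨v, w, hwv, hvw⟩
  have hve : Function.Injective e := e.injective
  refine ⟨Set.range (v ∘ f), ?_, ?_⟩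
  · intro x
    refine ⟨v (f x), ⟨⟨x, rfl⟩, hfuf x⟩, ?_⟩
    rintro t ⟨⟨a, rfl⟩, ht⟩
    have : f a = f x := by
      have := hfuf a
      simp only [Function.comp] at ht
      rw [this] at ht; exact ht
    simp [Function.comp, this]
  · have himg : Set.range (v ∘ f) = e '' (Set.range f) := by
      exact Set.range_comp _ _
    rw [himg, ← Set.image_compl_eq e.bijective]
    exact (Cardinal.mk_image_eq hve).symm ▸ Cardinal.mk_image_eq hve
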